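/- There is a family of OTIMAPP instances with n agents in which, for every feasible solution, the number of distinct fragments starting from a fixed vertex u is at least 2^n − 1; hence any algorithm that stores all fragments requires Ω(2^n) space in the worst case. -/

import Mathlib

open scoped Classical

/-- An OTIMAPP path set: `n` agents, agent `i` follows the path
`loc i 0, loc i 1, ..., loc i (L i)`; `loc i 0` is its start and `loc i (L i)` its goal. -/
structure OTI (V : Type) (n : ℕ) where
  L : Fin n → ℕ
  loc : Fin n → ℕ → V

namespace OTI

variable {V : Type} {n : ℕ}

/-- Activation of agent `i` in configuration `c` (clocks): the agent advances iff it is not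
at the end of its path and its next vertex is unoccupied. -/
noncomputable def step (P : OTI V n) (c : Fin n → ℕ) (i : Fin n) : Fin n → ℕ :=
  if c i < P.L i ∧ ∀ j, j ≠ i → P.loc j (c j) ≠ P.loc i (c i + 1)
  then Function.update c i (c i + 1) else c

/-- Configuration after the first `k` activations of execution `e`. -/
noncomputable def run (P : OTI V n) (e : ℕ → Fin n) : ℕ → Fin n → ℕ
  | 0 => fun _ => 0
  | k + 1 => P.step (P.run e k) (e k)

/-- An execution is fair when every agent is activated infinitely often. -/
def Fair (e : ℕ → Fin n) : Prop := ∀ (i : Fin n) (k : ℕ), ∃ m, k ≤ m ∧ e m = i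

/-- All agents reach their goals after finitely many activations. -/
def Terminates (P : OTI V n) (e : ℕ → Fin n) : Prop :=
  ∃ k, ∀ i, P.run e k i = P.L i

/-- A feasible OTIMAPP solution: every fair execution terminates. -/
def Feasible (P : OTI V n) : Prop := ∀ e, Fair e → P.Terminates e

/-- A configuration (assignment of clocks) is reachable by some execution. -/
def Reachable (P : OTI V n) (c : Fin n → ℕ) : Prop := ∃ e k, P.run e k = c

/-- A potential cyclic deadlock: distinct agents `σ 0, …, σ k` with clock values `t`
such that each agent's next vertex is the next agent's current vertex, cyclically. -/
def PotentialCyclic (P : OTI V n) {k : ℕ} (σ : Fin (k + 1) → Fin n)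
    (t : Fin (k + 1) → ℕ) : Prop :=
  Function.Injective σ ∧ (∀ m, t m < P.L (σ m)) ∧
    ∀ m, P.loc (σ m) (t m + 1) = P.loc (σ (m + 1)) (t (m + 1))

/-- A reachable cyclic deadlock: a potential cyclic deadlock whose clock values are realized
by some reachable configuration. -/
def ReachableCyclic (P : OTI V n) {k : ℕ} (σ : Fin (k + 1) → Fin n)
    (t : Fin (k + 1) → ℕ) : Prop :=
  P.PotentialCyclic σ t ∧ ∃ c, P.Reachable c ∧ ∀ m, c (σ m) = t m

/-- A potential terminal deadlock `(i, j, tj)`: agent `i`'s goal lies on `j`'s path. -/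
def PotentialTerminal (P : OTI V n) (i j : Fin n) (tj : ℕ) : Prop :=
  i ≠ j ∧ tj ≤ P.L j ∧ P.loc i (P.L i) = P.loc j tj

/-- A reachable terminal deadlock: some execution puts `i` at its goal and `j` at clock `tj - 1`. -/
def ReachableTerminal (P : OTI V n) (i j : Fin n) (tj : ℕ) : Prop :=
  P.PotentialTerminal i j tj ∧ ∃ c, P.Reachable c ∧ c i = P.L i ∧ c j + 1 = tj

/-- The path set is a set of paths on graph `G` with starts `s` and goals `g`. -/
def OnGraph (P : OTI V n) (G : SimpleGraph V) (s g : Fin n → V) : Prop :=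
  (∀ i, P.loc i 0 = s i) ∧ (∀ i, P.loc i (P.L i) = g i) ∧
    ∀ i t, t < P.L i → G.Adj (P.loc i t) (P.loc i (t + 1))

/-- A fragment: a nonempty chain of (agent, clock) pairs with distinct agents, where each
agent's next vertex equals the next agent's current vertex. -/
def IsFragment (P : OTI V n) (l : List (Fin n × ℕ)) : Prop :=
  l ≠ [] ∧ (l.map Prod.fst).Nodup ∧ (∀ p ∈ l, p.2 < P.L p.1) ∧
    l.Chain' fun p q => P.loc p.1 (p.2 + 1) = P.loc q.1 q.2

/-- The vertex a fragment starts from. -/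
def fragStart (P : OTI V n) (l : List (Fin n × ℕ)) : Option V :=
  l.head?.map fun p => P.loc p.1 p.2

/-- The vertex a fragment ends at. -/
def fragEnd (P : OTI V n) (l : List (Fin n × ℕ)) : Option V :=
  l.getLast?.map fun p => P.loc p.1 (p.2 + 1)

end OTI

namespace FragLB

open OTI

/-- Relation generating the hard graph. -/
def R (n : ℕ) (a b : ℕ) : Prop :=
  (a < n ∧ b = n) ∨ (n ≤ a ∧ a < 2*n ∧ b = a+1) ∨ (a = 2*n ∧ 2*n+1 ≤ b ∧ b ≤ 3*n)

def G (n : ℕ) : SimpleGraph ℕ := SimpleGraph.fromRel (R n)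

def canonLoc (n : ℕ) (i : Fin n) (t : ℕ) : ℕ :=
  if t = 0 then (i : ℕ) else if t ≤ n + 1 then n + (t - 1) else 2*n + 1 + (i : ℕ)

def canonP (n : ℕ) : OTI ℕ n := ⟨fun _ => n + 2, canonLoc n⟩

variable {n : ℕ}

lemma step_apply_le {V : Type} (P : OTI V n) (c : Fin n → ℕ) (i0 j : Fin n) :
    c j ≤ P.step c i0 j := by
  unfold OTI.step
  split_ifs with h
  · rw [Function.update_apply]
    split_ifs with hji
    · subst hji; omega
    · exact le_rfl
  · exact le_rfl

lemma run_succ {V : Type} (P : OTI V n) (e : ℕ → Fin n) (k : ℕ) :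
    P.run e (k+1) = P.step (P.run e k) (e k) := rfl

lemma run_le_L {V : Type} (P : OTI V n) (e : ℕ → Fin n) (k : ℕ) (j : Fin n) :
    P.run e k j ≤ P.L j := by
  induction k with
  | zero => simp [OTI.run]
  | succ k ih =>
    rw [run_succ]
    unfold OTI.step
    split_ifs with h
    · rw [Function.update_apply]
      split_ifs with hji
      · subst hji; omega
      · exact ih
    · exact ih

lemma canMove (c : Fin n → ℕ) (hle : ∀ i, c i ≤ n+2) (hne : ∃ i, c i ≠ n+2) :
    ∃ i, c i < n+2 ∧ ∀ j, j ≠ i → canonLoc n j (c j) ≠ canonLoc n i (c i + 1) := by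
  obtain ⟨i0, hi0⟩ := hne
  have hs : (Finset.univ.filter fun i => c i < n + 2).Nonempty :=
    ⟨i0, by simp; have := hle i0; omega⟩
  obtain ⟨i, hi, hmax⟩ := Finset.exists_max_image _ c hs
  simp only [Finset.mem_filter, Finset.mem_univ, true_and] at hi
  refine ⟨i, hi, ?_⟩
  intro j hj hEq
  have hmaxj : c j < n + 2 → c j ≤ c i := fun h =>
    hmax j (by simp only [Finset.mem_filter, Finset.mem_univ, true_and]; exact h)
  have hjlt : (j : ℕ) < n := j.isLt
  have hilt : (i : ℕ) < n := i.isLt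
  have hcj : c j ≤ n + 2 := hle j
  simp only [canonLoc] at hEq
  split_ifs at hEq <;> first
    | omega
    | exact hj (Fin.ext (by omega))

noncomputable def msr (e : ℕ → Fin n) (k : ℕ) : ℕ :=
  ∑ i, (n + 2 - (canonP n).run e k i)

lemma msr_succ_le (e : ℕ → Fin n) (k : ℕ) : msr e (k+1) ≤ msr e k :=
  Finset.sum_le_sum fun i _ =>
    Nat.sub_le_sub_left (by rw [run_succ]; exact step_apply_le _ _ _ _) _

lemma msr_anti (e : ℕ → Fin n) {k m : ℕ} (h : k ≤ m) : msr e m ≤ msr e k := by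
  induction m, h using Nat.le_induction with
  | base => exact le_rfl
  | succ m hm ih => exact le_trans (msr_succ_le e m) ih

lemma msr_lt_of_change (e : ℕ → Fin n) (k : ℕ)
    (h : (canonP n).run e (k+1) ≠ (canonP n).run e k) : msr e (k+1) < msr e k := by
  set c := (canonP n).run e k with hc
  have hguard : c (e k) < (canonP n).L (e k) ∧
      ∀ j, j ≠ e k → (canonP n).loc j (c j) ≠ (canonP n).loc (e k) (c (e k) + 1) := by
    by_contra hg
    apply h
    rw [run_succ, ← hc]
    unfold OTI.step
    exact if_neg hg
  have hstep : (canonP n).run e (k+1) = Function.update c (e k) (c (e k) + 1) := by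
    rw [run_succ, ← hc]
    unfold OTI.step
    exact if_pos hguard
  unfold msr
  rw [← hc, hstep]
  refine Finset.sum_lt_sum (fun i _ => ?_) ⟨e k, Finset.mem_univ _, ?_⟩
  · rw [Function.update_apply]
    split_ifs with hi
    · subst hi; omega
    · exact le_rfl
  · rw [Function.update_self]
    have : c (e k) < n + 2 := hguard.1
    omega

lemma canon_feasible : (canonP n).Feasible := by
  intro e hfair
  suffices h : ∀ N k, msr e k ≤ N → ∃ k', ∀ i, (canonP n).run e k' i = n + 2 by
    obtain ⟨k', hk'⟩ := h (msr e 0) 0 le_rfl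
    exact ⟨k', fun i => hk' i⟩
  intro N
  induction N with
  | zero =>
    intro k hk
    refine ⟨k, fun i => ?_⟩
    have h0 : ∀ i ∈ Finset.univ, n + 2 - (canonP n).run e k i = 0 :=
      Finset.sum_eq_zero_iff.mp (Nat.le_zero.mp hk)
    have h1 := h0 i (Finset.mem_univ i)
    have h2 : (canonP n).run e k i ≤ n + 2 := run_le_L (canonP n) e k i
    omega
  | succ N ih =>
    intro k hk
    by_cases hall : ∀ i, (canonP n).run e k i = n + 2
    · exact ⟨k, hall⟩
    · push_neg at hall
      by_cases hch : ∃ m, k ≤ m ∧ (canonP n).run e (m+1) ≠ (canonP n).run e m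
      · obtain ⟨m, hkm, hm⟩ := hch
        have h1 : msr e (m+1) < msr e m := msr_lt_of_change e m hm
        have h2 : msr e m ≤ msr e k := msr_anti e hkm
        exact ih (m+1) (by omega)
      · push_neg at hch
        have hconst : ∀ m, k ≤ m → (canonP n).run e m = (canonP n).run e k := by
          intro m hm
          induction m, hm using Nat.le_induction with
          | base => rfl
          | succ m hm ihm => rw [hch m hm, ihm]
        set c := (canonP n).run e k with hc
        obtain ⟨i, hilt, hblock⟩ := canMove c (fun j => run_le_L (canonP n) e k j) hall
        obtain ⟨m, hkm, hem⟩ := hfair i k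
        have hmv : (canonP n).run e (m+1) = Function.update c i (c i + 1) := by
          rw [run_succ, hconst m hkm, hem]
          unfold OTI.step
          exact if_pos ⟨hilt, hblock⟩
        have := congrFun (hch m hkm) i
        rw [hmv, hconst m hkm, Function.update_self] at this
        omega

lemma canon_onGraph : (canonP n).OnGraph (G n) (fun i => (i : ℕ)) (fun i => 2*n+1+(i : ℕ)) := by
  refine ⟨fun i => by simp [canonP, canonLoc], fun i => ?_, fun i t ht => ?_⟩
  · show canonLoc n i (n + 2) = 2*n+1+(i : ℕ)
    unfold canonLoc
    rw [if_neg (by omega), if_neg (by omega)]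
  · have hilt : (i : ℕ) < n := i.isLt
    have hL : (canonP n).L i = n + 2 := rfl
    rw [hL] at ht
    show (G n).Adj (canonLoc n i t) (canonLoc n i (t+1))
    rw [G, SimpleGraph.fromRel_adj]
    unfold canonLoc
    rcases Nat.eq_zero_or_pos t with h0 | hpos
    · subst h0
      rw [if_pos rfl, if_neg (by omega), if_pos (by omega)]
      exact ⟨by omega, Or.inl (Or.inl ⟨hilt, by omega⟩)⟩
    · by_cases hmid : t + 1 ≤ n + 1
      · rw [if_neg (by omega), if_pos (by omega), if_neg (by omega), if_pos hmid]
        refine ⟨by omega, Or.inl (Or.inr (Or.inl ⟨by omega, by omega, by omega⟩))⟩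
      · have ht1 : t = n + 1 := by omega
        rw [if_neg (by omega), if_pos (by omega), if_neg (by omega), if_neg hmid]
        refine ⟨by omega, Or.inl (Or.inr (Or.inr ⟨by omega, by omega, by omega⟩))⟩

/-- Every path on `G n` from start `i` to goal `2n+1+i` crosses the edge `(n+m, n+m+1)`. -/
lemma cross (P : OTI ℕ n)
    (hP : P.OnGraph (G n) (fun i => (i : ℕ)) (fun i => 2*n+1+(i : ℕ)))
    (i : Fin n) (m : ℕ) (hm : m < n) :
    ∃ t, t < P.L i ∧ P.loc i t = n + m ∧ P.loc i (t + 1) = n + m + 1 := by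
  obtain ⟨hs, hg, hadj⟩ := hP
  have hgi : P.loc i (P.L i) = 2*n+1+(i : ℕ) := hg i
  have hsi : P.loc i 0 = (i : ℕ) := hs i
  have hQL : n + m + 1 ≤ P.loc i (P.L i) ∧ P.L i ≤ P.L i := by
    rw [hgi]; exact ⟨by omega, le_rfl⟩
  have hex : ∃ t, n + m + 1 ≤ P.loc i t ∧ t ≤ P.L i := ⟨P.L i, hQL⟩
  classical
  set t0 := Nat.find hex with ht0
  have hspec := Nat.find_spec hex
  have ht0pos : t0 ≠ 0 := by
    intro h
    rw [← ht0, h] at hspec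
    rw [hsi] at hspec
    have := i.isLt
    omega
  have hprev : ¬ (n + m + 1 ≤ P.loc i (t0 - 1) ∧ t0 - 1 ≤ P.L i) :=
    Nat.find_min hex (by omega)
  have hprev' : P.loc i (t0 - 1) < n + m + 1 := by
    by_contra h
    exact hprev ⟨by omega, by omega⟩
  have htlt : t0 - 1 < P.L i := by
    have := hspec.2
    omega
  have hA := hadj i (t0 - 1) htlt
  have hsucc : t0 - 1 + 1 = t0 := by omega
  rw [G, SimpleGraph.fromRel_adj, hsucc] at hA
  obtain ⟨hne, hr⟩ := hA
  have h2 : n + m + 1 ≤ P.loc i t0 := hspec.1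
  refine ⟨t0 - 1, htlt, ?_, ?_⟩ <;>
    · rw [hsucc] at *
      unfold R at hr
      omega

/-- Build a fragment from a list of agents, starting at position `m` of the corridor. -/
def fragOf (T : Fin n → ℕ → ℕ) : ℕ → List (Fin n) → List (Fin n × ℕ)
  | _, [] => []
  | m, i :: rest => (i, T i m) :: fragOf T (m+1) rest

lemma fragOf_map_fst (T : Fin n → ℕ → ℕ) : ∀ (m : ℕ) (L : List (Fin n)),
    (fragOf T m L).map Prod.fst = L := by
  intro m L
  induction L generalizing m with
  | nil => rfl
  | cons a l ih => simp [fragOf, ih]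

lemma fragOf_ne_nil (T : Fin n → ℕ → ℕ) (m : ℕ) (a : Fin n) (l : List (Fin n)) :
    fragOf T m (a :: l) ≠ [] := by simp [fragOf]

lemma fragOf_clock (P : OTI ℕ n) (T : Fin n → ℕ → ℕ)
    (hT : ∀ i m, m < n → T i m < P.L i) :
    ∀ (L : List (Fin n)) (m : ℕ), m + L.length ≤ n →
      ∀ p ∈ fragOf T m L, p.2 < P.L p.1 := by
  intro L
  induction L with
  | nil => intro m _ p hp; simp [fragOf] at hp
  | cons a l ih =>
    intro m hlen p hp
    simp only [fragOf, List.mem_cons] at hp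
    rcases hp with rfl | hp
    · exact hT a m (by simp at hlen; omega)
    · exact ih (m+1) (by simp at hlen ⊢; omega) p hp

lemma fragOf_chain (P : OTI ℕ n) (T : Fin n → ℕ → ℕ)
    (hT1 : ∀ i m, m < n → P.loc i (T i m) = n + m)
    (hT2 : ∀ i m, m < n → P.loc i (T i m + 1) = n + m + 1) :
    ∀ (L : List (Fin n)) (m : ℕ), m + L.length ≤ n →
      (fragOf T m L).Chain' fun p q => P.loc p.1 (p.2 + 1) = P.loc q.1 q.2 := by
  intro L
  induction L with
  | nil => intro m _; exact List.isChain_nil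
  | cons a l ih =>
    intro m hlen
    cases l with
    | nil => exact List.isChain_singleton _
    | cons b l' =>
      simp only [List.length_cons] at hlen
      have h1 : m < n := by omega
      have h2 : m + 1 < n := by omega
      rw [show fragOf T m (a :: b :: l') =
          (a, T a m) :: (b, T b (m+1)) :: fragOf T (m+2) l' from rfl]
      apply List.isChain_cons_cons.mpr
      constructor
      · rw [hT2 a m h1, hT1 b (m+1) h2]; omega
      · have := ih (m+1) (by simp; omega)
        rwa [show fragOf T (m+1) (b :: l') = (b, T b (m+1)) :: fragOf T (m+2) l' from rfl] at this

end FragLB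

/-- there is a family of OTIMAPP instances with `n` agents in which, for every
feasible solution, the number of distinct fragments starting from a fixed vertex `u` is at
least `2 ^ n - 1`; hence storing all fragments requires `Ω(2 ^ n)` space. -/
theorem fragments_exponential_lower_bound :
    ∀ n : ℕ, ∃ (G : SimpleGraph ℕ) (s g : Fin n → ℕ) (u : ℕ),
      Function.Injective s ∧ Function.Injective g ∧
      (∃ P : OTI ℕ n, P.OnGraph G s g ∧ P.Feasible) ∧
      ∀ P : OTI ℕ n, P.OnGraph G s g → P.Feasible →
        2 ^ n - 1 ≤
          {l : List (Fin n × ℕ) | P.IsFragment l ∧ P.fragStart l = some u}.ncard := by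
  intro n
  refine ⟨FragLB.G n, (fun i => (i : ℕ)), (fun i => 2*n+1+(i : ℕ)), n,
    fun a b h => Fin.ext h,
    fun a b h => by
      have h' : 2*n+1+(a : ℕ) = 2*n+1+(b : ℕ) := h
      exact Fin.ext (by omega),
    ⟨FragLB.canonP n, FragLB.canon_onGraph, FragLB.canon_feasible⟩, ?_⟩
  intro P hP _
  -- choose crossing times
  have hex : ∀ (i : Fin n) (m : ℕ), ∃ t, m < n →
      t < P.L i ∧ P.loc i t = n + m ∧ P.loc i (t + 1) = n + m + 1 := by
    intro i m
    by_cases hm : m < n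
    · obtain ⟨t, h⟩ := FragLB.cross P hP i m hm
      exact ⟨t, fun _ => h⟩
    · exact ⟨0, fun h => absurd h hm⟩
  choose T hT using hex
  have hTL : ∀ i m, m < n → T i m < P.L i := fun i m hm => (hT i m hm).1
  have hT1 : ∀ i m, m < n → P.loc i (T i m) = n + m := fun i m hm => (hT i m hm).2.1
  have hT2 : ∀ i m, m < n → P.loc i (T i m + 1) = n + m + 1 := fun i m hm => (hT i m hm).2.2
  set Sset := {l : List (Fin n × ℕ) | P.IsFragment l ∧ P.fragStart l = some n} with hSset
  -- the set of fragments is finite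
  have hfin : Sset.Finite := by
    set B := (Finset.univ.sup P.L) + 1 with hB
    have hBpos : 0 < B := by omega
    have hsub : Sset ⊆ (fun l : List (Fin n × Fin B) =>
        l.map fun p => (p.1, (p.2 : ℕ))) '' {l : List (Fin n × Fin B) | l.length ≤ n} := by
      intro l hl
      obtain ⟨⟨_, hnd, hclk, _⟩, _⟩ := hl
      have hlB : ∀ p ∈ l, p.2 < B := by
        intro p hp
        have h1 : P.L p.1 ≤ Finset.univ.sup P.L := Finset.le_sup (Finset.mem_univ _)
        have := hclk p hp
        omega
      refine ⟨l.map (fun p => (p.1, (⟨p.2 % B, Nat.mod_lt _ hBpos⟩ : Fin B))), ?_, ?_⟩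
      · show _ ≤ n
        rw [List.length_map]
        have := hnd.length_le_card
        rwa [List.length_map, Fintype.card_fin] at this
      · show List.map (fun p : Fin n × Fin B => (p.1, (p.2 : ℕ)))
            (l.map fun p => (p.1, (⟨p.2 % B, Nat.mod_lt _ hBpos⟩ : Fin B))) = l
        rw [List.map_map]
        have hcg : ∀ p ∈ l, ((fun l : Fin n × Fin B => (l.1, (l.2 : ℕ))) ∘
            (fun p : Fin n × ℕ => (p.1, (⟨p.2 % B, Nat.mod_lt _ hBpos⟩ : Fin B)))) p = id p := by
          intro p hp
          simp [Nat.mod_eq_of_lt (hlB p hp)]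
        rw [List.map_congr_left hcg, List.map_id]
    exact Set.Finite.subset (Set.Finite.image _ (List.finite_length_le _ n)) hsub
  -- the injection from nonempty subsets of agents
  set Φ : Finset (Fin n) → List (Fin n × ℕ) := fun S => FragLB.fragOf T 0 (S.sort (· ≤ ·))
    with hΦ
  have hΦinj : Function.Injective Φ := by
    intro S S' h
    have h2 : (Φ S).map Prod.fst = (Φ S').map Prod.fst := by rw [h]
    simp only [hΦ, FragLB.fragOf_map_fst] at h2
    have h3 := congrArg List.toFinset h2
    rwa [Finset.sort_toFinset, Finset.sort_toFinset] at h3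
  set D : Finset (Finset (Fin n)) := Finset.univ.erase ∅ with hD
  have hDcard : D.card = 2 ^ n - 1 := by
    rw [hD, Finset.card_erase_of_mem (Finset.mem_univ _), Finset.card_univ,
      Fintype.card_finset, Fintype.card_fin]
  have hmem : ∀ S ∈ D, Φ S ∈ Sset := by
    intro S hS
    have hSne : S.Nonempty := Finset.nonempty_iff_ne_empty.mpr (Finset.ne_of_mem_erase hS)
    have hlen : (S.sort (· ≤ ·)).length = S.card := Finset.length_sort _
    have hcard : S.card ≤ n := by simpa using Finset.card_le_univ S
    obtain ⟨a, l, hal⟩ : ∃ a l, S.sort (· ≤ ·) = a :: l := by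
      cases h : S.sort (· ≤ ·) with
      | nil =>
        exfalso
        rw [h] at hlen
        simp only [List.length_nil] at hlen
        exact hSne.ne_empty (Finset.card_eq_zero.mp hlen.symm)
      | cons a l => exact ⟨a, l, rfl⟩
    have hlen0 : 0 + (S.sort (· ≤ ·)).length ≤ n := by rw [hlen]; omega
    constructor
    · refine ⟨?_, ?_, ?_, ?_⟩
      · rw [hΦ]
        show FragLB.fragOf T 0 (S.sort (· ≤ ·)) ≠ []
        rw [hal]
        exact FragLB.fragOf_ne_nil T 0 a l
      · show ((FragLB.fragOf T 0 (S.sort (· ≤ ·))).map Prod.fst).Nodup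
        rw [FragLB.fragOf_map_fst]
        exact Finset.sort_nodup _ _
      · exact FragLB.fragOf_clock P T hTL _ 0 hlen0
      · exact FragLB.fragOf_chain P T hT1 hT2 _ 0 hlen0
    · show P.fragStart (FragLB.fragOf T 0 (S.sort (· ≤ ·))) = some n
      rw [hal]
      show P.fragStart ((a, T a 0) :: FragLB.fragOf T 1 l) = some n
      unfold OTI.fragStart
      simp only [List.head?_cons, Option.map_some]
      rw [hT1 a 0 a.pos]
      simp
  -- count
  have hcoe : ↑(D.image Φ) ⊆ Sset := by
    intro x hx
    simp only [Finset.coe_image, Set.mem_image, Finset.mem_coe] at hx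
    obtain ⟨S, hS, rfl⟩ := hx
    exact hmem S hS
  calc 2 ^ n - 1 = (D.image Φ).card := by
        rw [Finset.card_image_of_injective _ hΦinj, hDcard]
    _ = (↑(D.image Φ) : Set (List (Fin n × ℕ))).ncard := (Set.ncard_coe_finset _).symm
    _ ≤ Sset.ncard := Set.ncard_le_ncard hcoe hfin
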